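/- Let X and Y be compact Hausdorff spaces equipped with finite regular Borel measures μ_X and μ_Y, let f : X → Y be continuous, and let M > 0. If ∫_X (g ∘ f) dμ_X ≤ M·∫_Y g dμ_Y for every continuous function g : Y → ℝ with g ≥ 0, then μ_X(f⁻¹(A)) ≤ M·μ_Y(A) for every Borel set A ⊆ Y. (Consequently the norm of f equals the norm of the induced homomorphism Cf : C(Y) → C(X) given by composition with f.) -/

import Mathlib

open MeasureTheory

/-- On compact Hausdorff spaces with finite regular Borel measures: if
`∫ (g ∘ f) dμ_X ≤ M·∫ g dμ_Y` for every nonnegative continuous `g`, then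
`μ_X(f⁻¹(A)) ≤ M·μ_Y(A)` for every Borel set `A` (so `|f| = |Cf|`). -/
theorem stmt_8 {X Y : Type*}
    [TopologicalSpace X] [CompactSpace X] [T2Space X] [MeasurableSpace X] [BorelSpace X]
    [TopologicalSpace Y] [CompactSpace Y] [T2Space Y] [MeasurableSpace Y] [BorelSpace Y]
    (μX : Measure X) (μY : Measure Y)
    [IsFiniteMeasure μX] [IsFiniteMeasure μY] [μX.Regular] [μY.Regular]
    {f : X → Y} (hf : Continuous f)
    (M : ℝ) (hM : 0 < M)
    (hb : ∀ g : Y → ℝ, Continuous g → (∀ y, 0 ≤ g y) →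
      ∫ x, g (f x) ∂μX ≤ M * ∫ y, g y ∂μY) :
    ∀ A : Set Y, MeasurableSet A → μX (f ⁻¹' A) ≤ ENNReal.ofReal M * μY A := by
  have key : ∀ U : Set Y, IsOpen U → μX (f ⁻¹' U) ≤ ENNReal.ofReal M * μY U := by
    intro U hU
    rw [(hU.preimage hf).measure_eq_iSup_isCompact]
    refine iSup₂_le fun K hKU => iSup_le fun hK => ?_
    obtain ⟨g, hg0, hg1, hg01⟩ :=
      exists_continuous_zero_one_of_isCompact (hK.image hf) hU.isClosed_compl
        (Set.disjoint_compl_right_iff_subset.2 (Set.image_subset_iff.2 hKU))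
    set h : Y → ℝ := fun y => 1 - g y with hh
    have hhc : Continuous h := continuous_const.sub g.continuous
    have hh0 : ∀ y, 0 ≤ h y := fun y => by
      have := (hg01 y).2; simp only [hh]; linarith
    have hh1 : ∀ y, h y ≤ 1 := fun y => by
      have := (hg01 y).1; simp only [hh]; linarith
    have hint : Integrable (fun x => h (f x)) μX := (hhc.comp hf).integrable_of_hasCompactSupport (isClosed_tsupport _).isCompact
    have hintY : Integrable h μY := hhc.integrable_of_hasCompactSupport (isClosed_tsupport _).isCompact
    have h1 : (μX K).toReal ≤ ∫ x, h (f x) ∂μX := by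
      have hK1 : ∀ x ∈ K, (1 : ℝ) = h (f x) := fun x hx => by
        have : g (f x) = 0 := hg0 (Set.mem_image_of_mem f hx)
        simp [hh, this]
      calc (μX K).toReal = ∫ _ in K, (1 : ℝ) ∂μX := by simp [setIntegral_const]; rfl
        _ = ∫ x in K, h (f x) ∂μX :=
            setIntegral_congr_fun hK.measurableSet hK1
        _ ≤ ∫ x, h (f x) ∂μX :=
            setIntegral_le_integral hint (Filter.Eventually.of_forall fun x => hh0 (f x))
    have h2 : ∫ y, h y ∂μY ≤ (μY U).toReal := by
      have hle : ∀ y, h y ≤ U.indicator (fun _ => (1 : ℝ)) y := fun y => by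
        by_cases hy : y ∈ U
        · simpa [hy] using hh1 y
        · have : g y = 1 := hg1 hy
          simp [Set.indicator_of_notMem hy, hh, this]
      calc ∫ y, h y ∂μY ≤ ∫ y, U.indicator (fun _ => (1 : ℝ)) y ∂μY :=
            integral_mono hintY ((integrable_const 1).indicator hU.measurableSet) hle
        _ = (μY U).toReal := by
            rw [integral_indicator_const _ hU.measurableSet]; simp; rfl
    have h3 : (μX K).toReal ≤ M * (μY U).toReal := by
      calc (μX K).toReal ≤ ∫ x, h (f x) ∂μX := h1
        _ ≤ M * ∫ y, h y ∂μY := hb h hhc hh0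
        _ ≤ M * (μY U).toReal := by nlinarith
    calc μX K = ENNReal.ofReal (μX K).toReal :=
          (ENNReal.ofReal_toReal (measure_ne_top _ _)).symm
      _ ≤ ENNReal.ofReal (M * (μY U).toReal) := ENNReal.ofReal_le_ofReal h3
      _ = ENNReal.ofReal M * ENNReal.ofReal (μY U).toReal :=
          ENNReal.ofReal_mul hM.le
      _ = ENNReal.ofReal M * μY U := by
          rw [ENNReal.ofReal_toReal (measure_ne_top _ _)]
  intro A _
  calc μX (f ⁻¹' A)
      ≤ ⨅ (U : Set Y) (_ : A ⊆ U) (_ : IsOpen U), ENNReal.ofReal M * μY U := by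
        refine le_iInf₂ fun U hAU => le_iInf fun hU => ?_
        exact (measure_mono (Set.preimage_mono hAU)).trans (key U hU)
    _ = ENNReal.ofReal M * μY A := by
        rw [A.measure_eq_iInf_isOpen μY]
        simp_rw [ENNReal.mul_iInf_of_ne (ENNReal.ofReal_pos.2 hM).ne' ENNReal.ofReal_ne_top]
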